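/- Let m = τ₁…τ₂ₙ be an orderly return for a state P in a medium. If for every 1 ≤ i ≤ n the tokens τᵢ and τᵢ₊ₙ are mutual reverses, then m is regular, i.e., for each 1 ≤ i ≤ n the message τᵢτᵢ₊₁…τᵢ₊ₙ₋₁ is concise for the state Pτ₁⋯τᵢ₋₁. -/

import Mathlib

variable {S : Type*}

/-- Result of applying message `m` (a list of tokens) to state `P`. -/
def mApply (m : List (S → S)) (P : S) : S := m.foldl (fun s τ => τ s) P

/-- `τ'` is a reverse of `τ`. -/
def IsReverse (τ τ' : S → S) : Prop := ∀ P Q : S, P ≠ Q → (τ P = Q ↔ τ' Q = P)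

/-- `(S, T)` is a token system. -/
def IsTokenSystem (T : Set (S → S)) : Prop :=
  Nontrivial S ∧ T.Nonempty ∧ ∀ τ ∈ T, τ ≠ id

/-- `m` is a message of the token system with token set `T`. -/
def IsMsg (T : Set (S → S)) (m : List (S → S)) : Prop := ∀ τ ∈ m, τ ∈ T

/-- `m` is stepwise effective for `P`. -/
def StepwiseEff : List (S → S) → S → Prop
  | [], _ => True
  | τ :: rest, P => τ P ≠ P ∧ StepwiseEff rest (τ P)

/-- `m` is consistent: it contains no token together with a reverse of it. -/
def Consistent (m : List (S → S)) : Prop :=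
  ∀ τ ∈ m, ∀ τ' ∈ m, ¬ IsReverse τ τ'

/-- `m` is concise for `P`. -/
def Concise (T : Set (S → S)) (m : List (S → S)) (P : S) : Prop :=
  IsMsg T m ∧ Consistent m ∧ StepwiseEff m P ∧ m.Nodup

/-- `m` is a return message for `P`. -/
def IsReturn (m : List (S → S)) (P : S) : Prop :=
  StepwiseEff m P ∧ mApply m P = P

/-- `m` is vacuous: its indices partition into pairs of mutually reverse tokens. -/
def Vacuous (m : List (S → S)) : Prop :=
  ∃ σ : Equiv.Perm (Fin m.length),
    (∀ i, σ i ≠ i) ∧ (∀ i, σ (σ i) = i) ∧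
    ∀ i, IsReverse (m.get i) (m.get (σ i))

/-- `(S, T)` is a medium: token system satisfying [Ma] and [Mb]. -/
def IsMedium (T : Set (S → S)) : Prop :=
  IsTokenSystem T ∧
  (∀ P Q : S, P ≠ Q → ∃ m, Concise T m P ∧ mApply m P = Q) ∧
  (∀ (m : List (S → S)) (P : S), IsMsg T m → IsReturn m P → Vacuous m)

/-- Content of a message: its set of tokens. -/
def msgContent (m : List (S → S)) : Set (S → S) := {τ | τ ∈ m}

/-- Token content of a state `P`. -/
def SContent (T : Set (S → S)) (P : S) : Set (S → S) :=
  {τ | ∃ (V : S) (m : List (S → S)), Concise T m V ∧ mApply m V = P ∧ τ ∈ m}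

/-- `mr` is the reverse message `τ̃ₙ…τ̃₁` of `m = τ₁…τₙ`. -/
def IsReverseOfMsg (m mr : List (S → S)) : Prop :=
  List.Forall₂ (fun τ τ' => IsReverse τ τ' ∧ IsReverse τ' τ) m mr.reverse

/-- An orderly return for `P`: a message `q · ñ` where `q`, `nn` are concise
messages producing the same state `V ≠ P` from `P`, and `ñ` reverses `nn`. -/
def OrderlyReturn (T : Set (S → S)) (m : List (S → S)) (P : S) : Prop :=
  ∃ q nn nr : List (S → S), Concise T q P ∧ Concise T nn P ∧
    mApply q P = mApply nn P ∧ mApply q P ≠ P ∧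
    IsReverseOfMsg nn nr ∧ m = q ++ nr

lemma mApply_append' (a b : List (S → S)) (P : S) :
    mApply (a ++ b) P = mApply b (mApply a P) := List.foldl_append

lemma mApply_cons (τ : S → S) (rest : List (S → S)) (P : S) :
    mApply (τ :: rest) P = mApply rest (τ P) := rfl

lemma stepwiseEff_append : ∀ {a b : List (S → S)} {P : S},
    StepwiseEff (a ++ b) P ↔ StepwiseEff a P ∧ StepwiseEff b (mApply a P) := by
  intro a
  induction a with
  | nil => intro b P; simp [StepwiseEff, mApply]
  | cons τ rest ih =>
    intro b P
    simp only [List.cons_append, StepwiseEff, List.append_eq, ih, mApply_cons, and_assoc]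

lemma isReverse_symm {τ τ' : S → S} (h : IsReverse τ τ') : IsReverse τ' τ := by
  intro P Q hPQ
  exact (h Q P hPQ.symm).symm

lemma isReverse_unique {τ τ₁ τ₂ : S → S} (h₁ : IsReverse τ τ₁) (h₂ : IsReverse τ τ₂) :
    τ₁ = τ₂ := by
  funext Q
  by_cases hq2 : τ₂ Q = Q
  · rw [hq2]
    by_contra h
    have ht : τ (τ₁ Q) = Q := (h₁ (τ₁ Q) Q h).mpr rfl
    have : τ₂ Q = τ₁ Q := (h₂ (τ₁ Q) Q h).mp ht
    rw [hq2] at this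
    exact h this.symm
  · have ht : τ (τ₂ Q) = Q := (h₂ (τ₂ Q) Q hq2).mpr rfl
    exact (h₁ (τ₂ Q) Q hq2).mp ht

lemma revMsg_spec : ∀ {nn l : List (S → S)},
    List.Forall₂ (fun τ τ' => IsReverse τ τ' ∧ IsReverse τ' τ) nn l →
    ∀ {P : S}, StepwiseEff nn P →
    StepwiseEff l.reverse (mApply nn P) ∧ mApply l.reverse (mApply nn P) = P := by
  intro nn l hf
  induction hf with
  | nil => intro P _; simp [mApply, StepwiseEff]
  | @cons τ τ' l₁ l₂ h hf ih =>
    intro P hSE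
    obtain ⟨hne, hrest⟩ := hSE
    obtain ⟨ihSE, ihAp⟩ := ih hrest
    have key : τ' (τ P) = P := (h.1 P (τ P) (Ne.symm hne)).mp rfl
    rw [mApply_cons, List.reverse_cons, stepwiseEff_append, mApply_append', ihAp]
    refine ⟨⟨ihSE, ?_, trivial⟩, ?_⟩
    · rw [key]; exact Ne.symm hne
    · show τ' (τ P) = P; exact key

lemma forall₂_mem_right {R : (S → S) → (S → S) → Prop} :
    ∀ {l₁ l₂ : List (S → S)}, List.Forall₂ R l₁ l₂ → ∀ τ' ∈ l₂, ∃ τ ∈ l₁, R τ τ' := by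
  intro l₁ l₂ h
  induction h with
  | nil => simp
  | @cons a b t₁ t₂ h hf ih =>
    intro τ' hm
    rcases List.mem_cons.mp hm with rfl | hm
    · exact ⟨a, List.mem_cons_self, h⟩
    · obtain ⟨τ, hτ, hR⟩ := ih τ' hm
      exact ⟨τ, List.mem_cons_of_mem _ hτ, hR⟩

lemma forall₂_nodup : ∀ {l₁ l₂ : List (S → S)},
    List.Forall₂ (fun τ τ' => IsReverse τ τ' ∧ IsReverse τ' τ) l₁ l₂ →
    l₁.Nodup → l₂.Nodup := by
  intro l₁ l₂ h
  induction h with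
  | nil => simp
  | @cons a b t₁ t₂ hR hf ih =>
    intro hnd
    rw [List.nodup_cons] at hnd ⊢
    refine ⟨?_, ih hnd.2⟩
    intro hb
    obtain ⟨τ, hτ, hRτ⟩ := forall₂_mem_right hf _ hb
    have : a = τ := isReverse_unique hR.2 hRτ.2
    exact hnd.1 (this ▸ hτ)

lemma nodup_getElem_ne {l : List (S → S)} (h : l.Nodup) {a b : ℕ}
    (ha : a < l.length) (hb : b < l.length) (hab : a ≠ b) : l[a] ≠ l[b] := by
  intro he
  have := List.nodup_iff_injective_get.mp h
    (show l.get ⟨a, ha⟩ = l.get ⟨b, hb⟩ by simpa [List.get_eq_getElem] using he)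
  exact hab (congrArg Fin.val this)

lemma pairing {T : Set (S → S)} (hM : IsMedium T) {m₁ m₂ : List (S → S)} {P : S}
    (hmsg : IsMsg T (m₁ ++ m₂)) (hret : IsReturn (m₁ ++ m₂) P) (hcon : Consistent m₁) :
    m₁.length ≤ m₂.length ∧ ∀ τ ∈ m₁, ∃ τ' ∈ m₂, IsReverse τ τ' := by
  obtain ⟨σ, -, -, hrev⟩ := hM.2.2 _ P hmsg hret
  have hL : (m₁ ++ m₂).length = m₁.length + m₂.length := List.length_append
  have key : ∀ (k : Fin (m₁ ++ m₂).length), (k : ℕ) < m₁.length → m₁.length ≤ (σ k : ℕ) := by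
    intro k hk
    by_contra hlt
    push_neg at hlt
    have h := hrev k
    rw [List.get_eq_getElem, List.get_eq_getElem,
        List.getElem_append_left hk, List.getElem_append_left hlt] at h
    exact hcon _ (List.getElem_mem _) _ (List.getElem_mem _) h
  have hcast : ∀ i : Fin m₁.length, (i : ℕ) < (m₁ ++ m₂).length := fun i => by
    have := i.isLt; omega
  constructor
  · let e : Fin m₁.length → Fin (m₁ ++ m₂).length := fun i => ⟨i, hcast i⟩
    let f : Fin m₁.length → Fin m₂.length := fun i =>
      ⟨(σ (e i) : ℕ) - m₁.length, by
        have h1 := (σ (e i)).isLt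
        have h2 := key (e i) i.isLt
        omega⟩
    have hfinj : Function.Injective f := by
      intro i j hij
      have hvi : (σ (e i) : ℕ) - m₁.length = (σ (e j) : ℕ) - m₁.length :=
        congrArg Fin.val hij
      have hi := key (e i) i.isLt
      have hj := key (e j) j.isLt
      have hσ : σ (e i) = σ (e j) := Fin.ext (by omega)
      have hee : e i = e j := σ.injective hσ
      have hv : (i : ℕ) = (j : ℕ) := by simpa [e] using congrArg Fin.val hee
      exact Fin.ext hv
    simpa using Fintype.card_le_of_injective f hfinj
  · intro τ hτ
    obtain ⟨a, ha, rfl⟩ := List.mem_iff_getElem.mp hτ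
    have hmem : a < (m₁ ++ m₂).length := by omega
    have hk := key ⟨a, hmem⟩ ha
    have hlt := (σ ⟨a, hmem⟩).isLt
    refine ⟨m₂[(σ ⟨a, hmem⟩ : ℕ) - m₁.length]'(by omega), List.getElem_mem _, ?_⟩
    have h := hrev ⟨a, hmem⟩
    rw [List.get_eq_getElem, List.get_eq_getElem, List.getElem_append_left ha,
        List.getElem_append_right hk] at h
    exact h

/-- If in an orderly return of length `2n` all opposite tokens are mutual reverses,
then the return is regular. -/
theorem stmt10 {T : Set (S → S)} (hM : IsMedium T) (P : S)
    (m : List (S → S)) (n : ℕ) (hlen : m.length = 2 * n)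
    (hor : OrderlyReturn T m P)
    (hopp : ∀ i (hi : i < n),
      IsReverse (m.get ⟨i, by omega⟩) (m.get ⟨i + n, by omega⟩) ∧
      IsReverse (m.get ⟨i + n, by omega⟩) (m.get ⟨i, by omega⟩)) :
    ∀ i < n, Concise T ((m.drop i).take n) (mApply (m.take i) P) := by
  obtain ⟨q, nn, nr, hq, hnn, hqnnV, hVneP, hrevmsg, hm⟩ := hor
  subst hm
  have hlen2 : q.length + nr.length = 2 * n := by simpa using hlen
  have hnnnr : nn.length = nr.length := by simpa using hrevmsg.length_eq
  obtain ⟨r, hr, hrApply⟩ := hM.2.1 (mApply q P) P hVneP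
  have msgapp : ∀ a b : List (S → S), IsMsg T a → IsMsg T b → IsMsg T (a ++ b) := by
    intro a b h1 h2 τ hτ
    rcases List.mem_append.mp hτ with h | h
    · exact h1 τ h
    · exact h2 τ h
  have hrevspec := revMsg_spec hrevmsg hnn.2.2.1
  rw [List.reverse_reverse, ← hqnnV] at hrevspec
  obtain ⟨hSEnr, hApnr⟩ := hrevspec
  have ret_qr : IsReturn (q ++ r) P :=
    ⟨stepwiseEff_append.mpr ⟨hq.2.2.1, hr.2.2.1⟩, by rw [mApply_append', hrApply]⟩
  have ret_rq : IsReturn (r ++ q) (mApply q P) :=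
    ⟨stepwiseEff_append.mpr ⟨hr.2.2.1, by rw [hrApply]; exact hq.2.2.1⟩,
     by rw [mApply_append', hrApply]⟩
  have ret_nnr : IsReturn (nn ++ r) P :=
    ⟨stepwiseEff_append.mpr ⟨hnn.2.2.1, by rw [← hqnnV]; exact hr.2.2.1⟩,
     by rw [mApply_append', ← hqnnV, hrApply]⟩
  have ret_rnn : IsReturn (r ++ nn) (mApply q P) :=
    ⟨stepwiseEff_append.mpr ⟨hr.2.2.1, by rw [hrApply]; exact hnn.2.2.1⟩,
     by rw [mApply_append', hrApply, ← hqnnV]⟩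
  have p1 := pairing hM (msgapp q r hq.1 hr.1) ret_qr hq.2.1
  have p2 := pairing hM (msgapp r q hr.1 hq.1) ret_rq hr.2.1
  have p3 := pairing hM (msgapp nn r hnn.1 hr.1) ret_nnr hnn.2.1
  have p4 := pairing hM (msgapp r nn hr.1 hnn.1) ret_rnn hr.2.1
  have l1 := p1.1
  have l2 := p2.1
  have l3 := p3.1
  have l4 := p4.1
  have hql : q.length = n := by omega
  have hnrl : nr.length = n := by omega
  have hnrT : ∀ τ' ∈ nr, τ' ∈ T := by
    intro τ' hτ'
    obtain ⟨τ, hτnn, hR⟩ := forall₂_mem_right hrevmsg τ' (List.mem_reverse.mpr hτ')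
    obtain ⟨ρ, hρr, hρ⟩ := p3.2 τ hτnn
    rw [isReverse_unique hR.1 hρ]
    exact hr.1 ρ hρr
  have hnrnd : nr.Nodup :=
    List.nodup_reverse.mp (forall₂_nodup hrevmsg hnn.2.2.2)
  have hoppA : ∀ (b : ℕ) (hb : b < n),
      IsReverse (q[b]'(by omega)) (nr[b]'(by omega)) ∧
      IsReverse (nr[b]'(by omega)) (q[b]'(by omega)) := by
    intro b hb
    have h := hopp b hb
    simp only [List.get_eq_getElem] at h
    have e1 : (q ++ nr)[b]'(by simp; omega) = q[b]'(by omega) :=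
      List.getElem_append_left (by omega)
    have e2 : (q ++ nr)[b + n]'(by simp; omega) = nr[b]'(by omega) := by
      rw [List.getElem_append_right (by omega)]
      simp only [hql, Nat.add_sub_cancel]
    rw [e1, e2] at h
    exact h
  intro i hi
  have hdrop : (((q ++ nr)).drop i).take n = q.drop i ++ nr.take i := by
    rw [List.drop_append, show i - q.length = 0 by omega, List.drop_zero,
        List.take_append,
        List.take_of_length_le (by rw [List.length_drop]; omega),
        List.length_drop, show n - (q.length - i) = i by omega]
  have htake : ((q ++ nr)).take i = q.take i := by
    rw [List.take_append, show i - q.length = 0 by omega, List.take_zero,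
        List.append_nil]
  rw [hdrop, htake]
  have memA : ∀ τ ∈ q.drop i, ∃ a, ∃ (_ : i ≤ a) (h2 : a < n), q[a]'(by omega) = τ := by
    intro τ hτ
    obtain ⟨j, hj, hget⟩ := List.mem_iff_getElem.mp hτ
    rw [List.getElem_drop] at hget
    rw [List.length_drop] at hj
    exact ⟨i + j, by omega, by omega, hget⟩
  have memB : ∀ τ ∈ nr.take i, ∃ b, ∃ (hb : b < i), nr[b]'(by omega) = τ := by
    intro τ hτ
    obtain ⟨j, hj, hget⟩ := List.mem_iff_getElem.mp hτ
    rw [List.getElem_take] at hget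
    rw [List.length_take] at hj
    exact ⟨j, by omega, hget⟩
  refine ⟨?_, ?_, ?_, ?_⟩
  · -- IsMsg
    intro τ hτ
    rcases List.mem_append.mp hτ with h | h
    · exact hq.1 τ (List.drop_subset _ _ h)
    · exact hnrT τ (List.take_subset _ _ h)
  · -- Consistent
    intro τ hτ τ' hτ' hrevττ'
    rcases List.mem_append.mp hτ with hA | hB <;> rcases List.mem_append.mp hτ' with hA' | hB'
    · exact hq.2.1 τ (List.drop_subset _ _ hA) τ' (List.drop_subset _ _ hA') hrevττ'
    · obtain ⟨a, ha1, ha2, hqa⟩ := memA τ hA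
      obtain ⟨b, hb1, hnrb⟩ := memB τ' hB'
      have hop := (hoppA b (by omega)).2
      rw [hnrb] at hop
      have heq : τ = q[b]'(by omega) := isReverse_unique (isReverse_symm hrevττ') hop
      rw [← hqa] at heq
      exact nodup_getElem_ne hq.2.2.2 (by omega) (by omega) (by omega) heq
    · obtain ⟨b, hb1, hnrb⟩ := memB τ hB
      obtain ⟨a, ha1, ha2, hqa⟩ := memA τ' hA'
      have hop := (hoppA b (by omega)).2
      rw [hnrb] at hop
      have heq : τ' = q[b]'(by omega) := isReverse_unique hrevττ' hop
      rw [← hqa] at heq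
      exact nodup_getElem_ne hq.2.2.2 (by omega) (by omega) (by omega) heq
    · obtain ⟨b, hb1, hnrb⟩ := memB τ hB
      obtain ⟨b', hb1', hnrb'⟩ := memB τ' hB'
      have hop := (hoppA b (by omega)).2
      rw [hnrb] at hop
      have heq : τ' = q[b]'(by omega) := isReverse_unique hrevττ' hop
      have hop' := (hoppA b' (by omega)).1
      rw [hnrb', heq] at hop'
      exact hq.2.1 _ (List.getElem_mem _) _ (List.getElem_mem _) hop'
  · -- StepwiseEff
    have hsplit : StepwiseEff (q.take i ++ q.drop i) P := by
      rw [List.take_append_drop]; exact hq.2.2.1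
    obtain ⟨hse1, hse2⟩ := stepwiseEff_append.mp hsplit
    rw [stepwiseEff_append]
    refine ⟨hse2, ?_⟩
    have happ : mApply (q.drop i) (mApply (q.take i) P) = mApply q P := by
      rw [← mApply_append', List.take_append_drop]
    rw [happ]
    have hsp2 : StepwiseEff (nr.take i ++ nr.drop i) (mApply q P) := by
      rw [List.take_append_drop]; exact hSEnr
    exact (stepwiseEff_append.mp hsp2).1
  · -- Nodup
    rw [List.nodup_append]
    refine ⟨List.Nodup.sublist (List.drop_sublist _ _) hq.2.2.2,
            List.Nodup.sublist (List.take_sublist _ _) hnrnd, ?_⟩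
    intro τ hA τ₂ hB hEq; subst hEq
    obtain ⟨b, hb1, hnrb⟩ := memB τ hB
    have hop := (hoppA b (by omega)).2
    rw [hnrb] at hop
    exact hq.2.1 τ (List.drop_subset _ _ hA) _ (List.getElem_mem _) hop
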